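/- For every integer n ≥ 1, the bivariate polynomial T_{2n}(X) + T_{2n}(Y) ∈ ℂ[X, Y] is a product of exactly n irreducible polynomials which are pairwise non-associated; in particular for n ≥ 2 it is reducible. -/

import Mathlib

open Polynomial

section AuxChebFact

open Polynomial.Chebyshev


lemma T_deg_coeff : ∀ m : ℕ, (T ℂ m).degree ≤ m ∧ (T ℂ m).coeff m = 2 ^ (m - 1) := by
  intro m
  induction m using Nat.twoStepInduction with
  | zero => simp [T_zero]
  | one => simp [T_one, degree_X_le]
  | more k ih1 ih2 =>
    have hT : T ℂ ((k + 2 : ℕ) : ℤ) = 2 * X * T ℂ ((k + 1 : ℕ) : ℤ) - T ℂ (k : ℕ) := by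
      push_cast
      exact T_add_two ℂ k
    constructor
    · rw [hT]
      refine (degree_sub_le _ _).trans (max_le ?_ ?_)
      · refine (degree_mul_le _ _).trans ?_
        have h1 : (2 * X : ℂ[X]).degree ≤ 1 := by
          compute_degree
        calc (2 * X : ℂ[X]).degree + (T ℂ ((k+1:ℕ):ℤ)).degree
            ≤ 1 + ((k+1 : ℕ) : WithBot ℕ) := add_le_add h1 ih2.1
          _ = ((k+2 : ℕ) : WithBot ℕ) := by push_cast; ring
      · exact ih1.1.trans (by exact_mod_cast Nat.le_add_right k 2)
    · rw [hT, coeff_sub]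
      have h0 : (T ℂ (k : ℕ)).coeff (k + 2) = 0 :=
        coeff_eq_zero_of_degree_lt (lt_of_le_of_lt ih1.1 (by exact_mod_cast Nat.lt_add_of_pos_right (by omega)))
      have h1 : (2 * X * T ℂ ((k+1:ℕ):ℤ)).coeff (k + 2) = 2 * (T ℂ ((k+1:ℕ):ℤ)).coeff (k+1) := by
        rw [mul_assoc, (map_ofNat (C : ℂ →+* ℂ[X]) 2).symm, coeff_C_mul, coeff_X_mul]
      rw [h0, h1, ih2.2]
      have h2 : k + 2 - 1 = k + 1 := rfl
      have h3 : k + 1 - 1 = k := rfl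
      rw [h2, h3, pow_succ]
      ring



noncomputable def ccc (n k : ℕ) : ℂ :=
  Complex.cos (((2 * k + 1 : ℕ) : ℂ) * (Real.pi : ℂ) / (2 * n))

lemma ccc_real (n k : ℕ) :
    ccc n k = ((Real.cos ((2 * k + 1 : ℕ) * Real.pi / (2 * n)) : ℝ) : ℂ) := by
  rw [Complex.ofReal_cos, ccc]
  push_cast
  ring_nf

lemma ccc_root {n k : ℕ} (hn : 1 ≤ n) (_hk : k < n) :
    (T ℂ (n : ℤ)).eval (ccc n k) = 0 := by
  have hn0 : (n : ℂ) ≠ 0 := by exact_mod_cast Nat.cast_ne_zero.mpr (by omega)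
  rw [ccc, T_complex_cos, Complex.cos_eq_zero_iff]
  refine ⟨(k : ℤ), ?_⟩
  push_cast
  field_simp

lemma ccc_inj {n : ℕ} (hn : 1 ≤ n) : ∀ j < n, ∀ k < n, ccc n j = ccc n k → j = k := by
  intro j hj k hk h
  rw [ccc_real, ccc_real] at h
  have h' := Complex.ofReal_injective h
  have hmem : ∀ m : ℕ, m < n → (2 * m + 1 : ℕ) * Real.pi / (2 * n) ∈ Set.Icc 0 Real.pi := by
    intro m hm
    have hπ := Real.pi_pos
    constructor
    · positivity
    · rw [div_le_iff₀ (by positivity)]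
      have : ((2 * m + 1 : ℕ) : ℝ) ≤ 2 * n := by
        push_cast; have : 2 * m + 1 ≤ 2 * n := by omega
        exact_mod_cast this
      nlinarith
  have := Real.strictAntiOn_cos.injOn (hmem j hj) (hmem k hk) h'
  have hn0 : (0:ℝ) < 2 * n := by positivity
  have hπ := Real.pi_pos
  field_simp at this
  have h2 : ((2 * j + 1 : ℕ) : ℝ) = ((2 * k + 1 : ℕ) : ℝ) := by push_cast at this ⊢; linarith
  have h3 : 2 * j + 1 = 2 * k + 1 := by exact_mod_cast h2
  omega

lemma T_eq_prod {n : ℕ} (hn : 1 ≤ n) :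
    T ℂ (n : ℤ) = C ((2:ℂ) ^ (n - 1)) * ∏ k ∈ Finset.range n, (X - C (ccc n k)) := by
  set a : ℂ := (2:ℂ) ^ (n - 1) with ha
  set q : ℂ[X] := ∏ k ∈ Finset.range n, (X - C (ccc n k)) with hq
  have hqm : q.Monic := monic_prod_of_monic _ _ fun k _ => monic_X_sub_C _
  have hqd : q.natDegree = n := by
    rw [hq, natDegree_prod_of_monic _ _ fun k _ => monic_X_sub_C _]
    simp
  set p : ℂ[X] := T ℂ (n : ℤ) - C a * q with hp
  have hco : p.coeff n = 0 := by
    have hq1 : q.coeff n = 1 := hqd ▸ hqm.coeff_natDegree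
    rw [hp, coeff_sub, coeff_C_mul, (T_deg_coeff n).2, hq1]
    simp [ha]
  have hdeg : p.degree ≤ n := by
    rw [hp]
    refine (degree_sub_le _ _).trans (max_le (T_deg_coeff n).1 ?_)
    refine (degree_mul_le _ _).trans ?_
    calc (C a).degree + q.degree ≤ 0 + n := by
          refine add_le_add degree_C_le ?_
          rw [← hqd]; exact degree_le_natDegree.trans (by rw [hqd])
      _ = n := by simp
  have hpz : p = 0 := by
    by_cases h0 : p = 0
    · exact h0
    have hnd : p.natDegree < n := by
      have hle : p.natDegree ≤ n := natDegree_le_iff_degree_le.mpr hdeg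
      rcases lt_or_eq_of_le hle with h | h
      · exact h
      · exact absurd (leadingCoeff_eq_zero.mp (by rw [leadingCoeff, h]; exact hco)) h0
    refine eq_zero_of_natDegree_lt_card_of_eval_eq_zero p
      (f := fun i : Fin n => ccc n i) ?_ ?_ (by simpa using hnd)
    · intro i j hij
      exact Fin.ext (ccc_inj hn i i.2 j j.2 hij)
    · intro i
      rw [hp, eval_sub, eval_mul, ccc_root hn i.2]
      have : q.eval (ccc n i) = 0 := by
        rw [hq, eval_prod]
        refine Finset.prod_eq_zero (Finset.mem_range.mpr i.2) ?_
        simp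
      rw [this]; ring
  have := sub_eq_zero.mp hpz
  exact this




lemma cos_eq_prod {n : ℕ} (hn : 1 ≤ n) (γ : ℂ) :
    Complex.cos (n * γ) = (2:ℂ) ^ (n - 1) * ∏ k ∈ Finset.range n, (Complex.cos γ - ccc n k) := by
  have h := congrArg (Polynomial.eval (Complex.cos γ)) (T_eq_prod hn)
  rw [T_complex_cos] at h
  rw [show ((n : ℤ) : ℂ) = (n : ℂ) by push_cast; ring] at h
  rw [h, eval_mul, eval_C, eval_prod]
  simp

lemma pointwise {n : ℕ} (hn : 1 ≤ n) (x y : ℂ) :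
    (T ℂ ((2 * n : ℕ) : ℤ)).eval x + (T ℂ ((2 * n : ℕ) : ℤ)).eval y =
      (2:ℂ) ^ (2 * n - 1) *
        ∏ k ∈ Finset.range n,
          (x ^ 2 + y ^ 2 - 2 * ccc n k * x * y + ((ccc n k) ^ 2 - 1)) := by
  obtain ⟨α, rfl⟩ := Complex.cos_surjective x
  obtain ⟨β, rfl⟩ := Complex.cos_surjective y
  rw [T_complex_cos, T_complex_cos]
  have h1 : (((2 * n : ℕ) : ℤ) : ℂ) * α = (2 * n : ℕ) * α := by push_cast; ring
  have h2 : (((2 * n : ℕ) : ℤ) : ℂ) * β = (2 * n : ℕ) * β := by push_cast; ring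
  rw [h1, h2, Complex.cos_add_cos]
  have e1 : ((2 * n : ℕ) * α + (2 * n : ℕ) * β) / 2 = (n : ℕ) * (α + β) := by push_cast; ring
  have e2 : ((2 * n : ℕ) * α - (2 * n : ℕ) * β) / 2 = (n : ℕ) * (α - β) := by push_cast; ring
  rw [e1, e2, cos_eq_prod hn, cos_eq_prod hn]
  rw [show (2:ℂ) ^ (2 * n - 1) = 2 * ((2:ℂ) ^ (n - 1) * (2:ℂ) ^ (n - 1)) by
    rw [show 2 * n - 1 = (n - 1) + (n - 1) + 1 from by omega, pow_add, pow_add, pow_one]; ring]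
  have hprod : (∏ k ∈ Finset.range n, (Complex.cos (α + β) - ccc n k)) *
      (∏ k ∈ Finset.range n, (Complex.cos (α - β) - ccc n k)) =
      ∏ k ∈ Finset.range n,
        (Complex.cos α ^ 2 + Complex.cos β ^ 2 - 2 * ccc n k * Complex.cos α * Complex.cos β
          + ((ccc n k) ^ 2 - 1)) := by
    rw [← Finset.prod_mul_distrib]
    refine Finset.prod_congr rfl fun k _ => ?_
    have hA := Complex.sin_sq_add_cos_sq α
    have hB := Complex.sin_sq_add_cos_sq β
    rw [Complex.cos_add, Complex.cos_sub]
    set c := ccc n k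
    linear_combination (-(Complex.sin β ^ 2)) * hA + (-(1 - Complex.cos α ^ 2)) * hB
  rw [← hprod]
  ring


noncomputable def EE : MvPolynomial (Fin 2) ℂ ≃ₐ[ℂ] Polynomial (Polynomial ℂ) :=
  (MvPolynomial.finSuccEquiv ℂ 1).trans
    (Polynomial.mapAlgEquiv ((MvPolynomial.finSuccEquiv ℂ 0).trans
      (Polynomial.mapAlgEquiv (MvPolynomial.isEmptyAlgEquiv ℂ (Fin 0)))))

noncomputable def qq (c : ℂ) : MvPolynomial (Fin 2) ℂ :=
  MvPolynomial.X 0 ^ 2 + MvPolynomial.X 1 ^ 2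
    - MvPolynomial.C (2 * c) * MvPolynomial.X 0 * MvPolynomial.X 1
    + MvPolynomial.C (c ^ 2 - 1)

noncomputable def PP (c : ℂ) : Polynomial (Polynomial ℂ) :=
  X ^ 2 - C (C (2 * c) * X) * X + C (X ^ 2 + C (c ^ 2 - 1))

lemma EE_X0 : EE (MvPolynomial.X 0) = X := by
  simp [EE, MvPolynomial.finSuccEquiv_X_zero]

lemma EE_X1 : EE (MvPolynomial.X 1) = C X := by
  have h0 : (MvPolynomial.X 1 : MvPolynomial (Fin 2) ℂ) = MvPolynomial.X (Fin.succ 0) := rfl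
  rw [EE, AlgEquiv.trans_apply, h0, MvPolynomial.finSuccEquiv_X_succ, coe_mapAlgEquiv, Polynomial.map_C]
  congr 1
  show ((MvPolynomial.finSuccEquiv ℂ 0).trans
      (Polynomial.mapAlgEquiv (MvPolynomial.isEmptyAlgEquiv ℂ (Fin 0)))) (MvPolynomial.X 0) = X
  rw [AlgEquiv.trans_apply, MvPolynomial.finSuccEquiv_X_zero, coe_mapAlgEquiv, map_X]

lemma EE_C (a : ℂ) : EE (MvPolynomial.C a) = C (C a) := by
  have h1 : MvPolynomial.C a = algebraMap ℂ (MvPolynomial (Fin 2) ℂ) a := rfl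
  rw [h1, AlgEquiv.commutes]
  rw [Polynomial.algebraMap_apply, Polynomial.algebraMap_apply]
  norm_num

lemma EE_qq (c : ℂ) : EE (qq c) = PP c := by
  rw [qq, PP]
  simp only [map_add, map_sub, map_mul, map_pow, EE_X0, EE_X1, EE_C, C_add, C_sub, C_mul, C_pow,
    C_1]
  ring



lemma PP_eq (c : ℂ) : PP c = X ^ 2 + (C (-(C (2 * c) * X)) * X + C (X ^ 2 + C (c ^ 2 - 1))) := by
  rw [PP, map_neg]; ring

lemma PP_rest_lt (c : ℂ) : (C (-(C (2 * c) * X)) * X + C (X ^ 2 + C (c ^ 2 - 1))).degree <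
    (X ^ 2 : Polynomial (Polynomial ℂ)).degree := by
  refine lt_of_le_of_lt (degree_add_le _ _) (max_lt ?_ ?_)
  · refine lt_of_le_of_lt (degree_mul_le _ _) ?_
    calc (C (-(C (2*c) * X))).degree + (X : Polynomial (Polynomial ℂ)).degree
        ≤ 0 + 1 := add_le_add degree_C_le degree_X_le
      _ < (X ^ 2 : Polynomial (Polynomial ℂ)).degree := by
          rw [degree_X_pow]; decide
  · refine lt_of_le_of_lt degree_C_le ?_
    rw [degree_X_pow]; decide

lemma PP_monic (c : ℂ) : (PP c).Monic := by
  rw [PP_eq]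
  exact (monic_X_pow 2).add_of_left (PP_rest_lt c)

lemma PP_natDegree (c : ℂ) : (PP c).natDegree = 2 := by
  have h : (PP c).degree = 2 := by
    rw [PP_eq, degree_add_eq_left_of_degree_lt (PP_rest_lt c), degree_X_pow]
    rfl
  exact natDegree_eq_of_degree_eq_some h

lemma PP_coeff_one (c : ℂ) : (PP c).coeff 1 = -(C (2 * c) * X) := by
  rw [PP]
  simp only [coeff_add, coeff_sub, coeff_X_pow, coeff_C, coeff_C_mul, coeff_X_one]
  norm_num

lemma PP_coeff_zero (c : ℂ) : (PP c).coeff 0 = X ^ 2 + C (c ^ 2 - 1) := by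
  rw [PP]
  simp only [coeff_add, coeff_sub, coeff_X_pow, coeff_C, coeff_C_mul, coeff_X_zero]
  norm_num

lemma PP_irred {c : ℂ} (hc : c ^ 2 ≠ 1) : Irreducible (PP c) := by
  by_contra hni
  obtain ⟨c₁, c₂, hmul, hadd⟩ :=
    ((PP_monic c).not_irreducible_iff_exists_add_mul_eq_coeff (PP_natDegree c)).mp hni
  rw [PP_coeff_zero] at hmul
  rw [PP_coeff_one] at hadd
  have he : (4 * (c ^ 2 - 1) : ℂ) ≠ 0 := mul_ne_zero (by norm_num) (sub_ne_zero.mpr hc)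
  have ht2 : (c₁ - c₂) ^ 2 = C (4 * (c ^ 2 - 1)) * ((X - C 1) * (X + C 1)) := by
    simp only [Polynomial.C_mul, C_sub, C_add, C_pow, C_1, map_ofNat] at hmul hadd ⊢
    linear_combination (-(c₁ + c₂ + -(2 * C c * X))) * hadd + (4 : Polynomial ℂ) * hmul
  have hprime : Prime (X - C (1 : ℂ)) := prime_X_sub_C 1
  have hdvd : (X - C (1 : ℂ)) ∣ (c₁ - c₂) ^ 2 :=
    ⟨C (4 * (c ^ 2 - 1)) * (X + C 1), by rw [ht2]; ring⟩
  obtain ⟨u, hu⟩ := hprime.dvd_of_dvd_pow hdvd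
  rw [hu] at ht2
  have hXne : (X - C (1 : ℂ)) ≠ 0 := X_sub_C_ne_zero 1
  have hcanc : (X - C (1:ℂ)) * u ^ 2 = C (4 * (c ^ 2 - 1)) * (X + C 1) := by
    apply mul_left_cancel₀ hXne
    linear_combination ht2
  have hev := congrArg (Polynomial.eval 1) hcanc
  simp only [eval_mul, eval_sub, eval_add, eval_pow, eval_X, eval_C] at hev
  apply he
  linear_combination - hev / 2


lemma eval_aeval (v : Fin 2 → ℂ) (i : Fin 2) (p : ℂ[X]) :
    MvPolynomial.eval v (Polynomial.aeval (MvPolynomial.X i) p) = p.eval (v i) := by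
  have h := Polynomial.aeval_algHom_apply
    (MvPolynomial.aeval v : MvPolynomial (Fin 2) ℂ →ₐ[ℂ] ℂ) (MvPolynomial.X i) p
  simp only [MvPolynomial.aeval_X, Polynomial.coe_aeval_eq_eval] at h
  rw [h]
  rw [MvPolynomial.aeval_def]
  rfl

lemma ccc_sq_ne_one {n k : ℕ} (hn : 1 ≤ n) (hk : k < n) : (ccc n k) ^ 2 ≠ 1 := by
  have hπ := Real.pi_pos
  set θ : ℝ := (2 * k + 1 : ℕ) * Real.pi / (2 * n) with hθ
  have hθ0 : 0 < θ := by
    rw [hθ]; positivity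
  have hθπ : θ < Real.pi := by
    rw [hθ, div_lt_iff₀ (by positivity)]
    have h1 : ((2 * k + 1 : ℕ) : ℝ) < 2 * n := by
      have : (2 * k + 1 : ℕ) < 2 * n := by omega
      exact_mod_cast this
    nlinarith
  have h1 : Real.cos θ < 1 := by
    have := Real.strictAntiOn_cos (Set.mem_Icc.mpr ⟨le_refl 0, le_of_lt hπ⟩)
      (Set.mem_Icc.mpr ⟨le_of_lt hθ0, le_of_lt hθπ⟩) hθ0
    simpa using this
  have h2 : -1 < Real.cos θ := by
    have := Real.strictAntiOn_cos (Set.mem_Icc.mpr ⟨le_of_lt hθ0, le_of_lt hθπ⟩)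
      (Set.mem_Icc.mpr ⟨le_of_lt hπ, le_refl _⟩) hθπ
    simpa using this
  have hsq : (Real.cos θ) ^ 2 < 1 := by nlinarith
  rw [ccc_real]
  intro h
  rw [show ((Real.cos θ : ℝ) : ℂ) ^ 2 = ((Real.cos θ ^ 2 : ℝ) : ℂ) by push_cast; ring] at h
  have : (Real.cos θ) ^ 2 = 1 := by exact_mod_cast h
  linarith

lemma qq_irred {c : ℂ} (hc : c ^ 2 ≠ 1) : Irreducible (qq c) := by
  have h : Irreducible (EE (qq c)) := by rw [EE_qq]; exact PP_irred hc
  exact (MulEquiv.irreducible_iff (EE : MvPolynomial (Fin 2) ℂ ≃ₐ[ℂ] _)).mp h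

lemma qq_assoc_inj {c c' : ℂ} (h : Associated (qq c) (qq c')) : c = c' := by
  obtain ⟨u, hu⟩ := h
  have hP : Associated (PP c) (PP c') := by
    refine ⟨Units.map (EE.toAlgHom.toRingHom.toMonoidHom) u, ?_⟩
    rw [← EE_qq, ← EE_qq]
    show EE (qq c) * EE.toAlgHom.toRingHom.toMonoidHom ↑u = EE (qq c')
    rw [← hu]
    exact (map_mul EE _ _).symm
  have heq : PP c = PP c' := Polynomial.eq_of_monic_of_associated (PP_monic c) (PP_monic c') hP
  have h1 := congrArg (fun p : Polynomial (Polynomial ℂ) => (p.coeff 1).coeff 1) heq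
  simp only [PP_coeff_one, coeff_neg, coeff_C_mul, coeff_X_one, mul_one] at h1
  have : (2 : ℂ) * c = 2 * c' := by linear_combination -h1
  linear_combination this / 2

lemma mv_eq {n : ℕ} (hn : 1 ≤ n) :
    Polynomial.aeval (MvPolynomial.X 0) (Chebyshev.T ℂ ((2 * n : ℕ) : ℤ)) +
        Polynomial.aeval (MvPolynomial.X 1) (Chebyshev.T ℂ ((2 * n : ℕ) : ℤ)) =
      MvPolynomial.C ((2:ℂ) ^ (2 * n - 1)) * ∏ k ∈ Finset.range n, qq (ccc n k) := by
  apply MvPolynomial.funext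
  intro v
  rw [map_add, eval_aeval, eval_aeval, map_mul, MvPolynomial.eval_C, map_prod,
    pointwise hn (v 0) (v 1)]
  congr 1
  refine Finset.prod_congr rfl fun k _ => ?_
  rw [qq]
  simp only [map_add, map_sub, map_mul, map_pow, MvPolynomial.eval_X, MvPolynomial.eval_C]


end AuxChebFact

/-- For every `n ≥ 1`, the bivariate polynomial `T_{2n}(X) + T_{2n}(Y) ∈ ℂ[X,Y]`
is a product of exactly `n` pairwise non-associated irreducible polynomials;
in particular for `n ≥ 2` it is not irreducible. -/
theorem chebyshev_sum_factorization (n : ℕ) (hn : 1 ≤ n) :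
    ∃ f : Fin n → MvPolynomial (Fin 2) ℂ,
      (∀ i, Irreducible (f i)) ∧
      (∀ i j, i ≠ j → ¬ Associated (f i) (f j)) ∧
      (Polynomial.aeval (MvPolynomial.X 0) (Chebyshev.T ℂ ((2 * n : ℕ) : ℤ)) +
          Polynomial.aeval (MvPolynomial.X 1) (Chebyshev.T ℂ ((2 * n : ℕ) : ℤ)) =
        ∏ i, f i) ∧
      (2 ≤ n →
        ¬ Irreducible
          (Polynomial.aeval (MvPolynomial.X 0) (Chebyshev.T ℂ ((2 * n : ℕ) : ℤ)) +
              Polynomial.aeval (MvPolynomial.X 1) (Chebyshev.T ℂ ((2 * n : ℕ) : ℤ)) :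
            MvPolynomial (Fin 2) ℂ)) := by
  have hk0 : ((2:ℂ) ^ (2 * n - 1)) ≠ 0 := pow_ne_zero _ (by norm_num)
  have hCkU : IsUnit (MvPolynomial.C ((2:ℂ) ^ (2 * n - 1)) : MvPolynomial (Fin 2) ℂ) :=
    (isUnit_iff_ne_zero.mpr hk0).map (MvPolynomial.C : ℂ →+* MvPolynomial (Fin 2) ℂ)
  set i0 : Fin n := ⟨0, by omega⟩ with hi0
  set f : Fin n → MvPolynomial (Fin 2) ℂ := fun i =>
    (if i = i0 then MvPolynomial.C ((2:ℂ) ^ (2 * n - 1)) else 1) * qq (ccc n i) with hf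
  have hassoc : ∀ i : Fin n, Associated (qq (ccc n i)) (f i) := by
    intro i
    show Associated (qq (ccc n i))
      ((if i = i0 then MvPolynomial.C ((2:ℂ) ^ (2 * n - 1)) else 1) * qq (ccc n i))
    by_cases h : i = i0
    · rw [if_pos h]
      exact ⟨hCkU.unit, by rw [IsUnit.unit_spec]; ring⟩
    · rw [if_neg h, one_mul]
  have hirr : ∀ i : Fin n, Irreducible (f i) := fun i =>
    (hassoc i).irreducible (qq_irred (ccc_sq_ne_one hn i.2))
  have hprodeq : (Polynomial.aeval (MvPolynomial.X 0) (Chebyshev.T ℂ ((2 * n : ℕ) : ℤ)) +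
      Polynomial.aeval (MvPolynomial.X 1) (Chebyshev.T ℂ ((2 * n : ℕ) : ℤ)) :
        MvPolynomial (Fin 2) ℂ) = ∏ i, f i := by
    rw [mv_eq hn, hf]
    rw [Finset.prod_mul_distrib, Finset.prod_ite_eq' Finset.univ i0
      (fun _ => (MvPolynomial.C ((2:ℂ) ^ (2 * n - 1)) : MvPolynomial (Fin 2) ℂ))]
    rw [if_pos (Finset.mem_univ i0)]
    congr 1
    exact (Fin.prod_univ_eq_prod_range (fun k => qq (ccc n k)) n).symm
  have hnassoc : ∀ i j : Fin n, i ≠ j → ¬ Associated (f i) (f j) := by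
    intro i j hij hA
    have h2 : Associated (qq (ccc n i)) (qq (ccc n j)) :=
      (hassoc i).trans (hA.trans (hassoc j).symm)
    exact hij (Fin.ext (ccc_inj hn i i.2 j j.2 (qq_assoc_inj h2)))
  refine ⟨f, hirr, hnassoc, hprodeq, ?_⟩
  intro hn2 hIrr
  rw [hprodeq] at hIrr
  set i1 : Fin n := ⟨1, by omega⟩ with hi1
  have hsplit : ∏ i, f i = f i0 * ∏ i ∈ Finset.univ.erase i0, f i :=
    (Finset.mul_prod_erase Finset.univ f (Finset.mem_univ i0)).symm
  rcases hIrr.isUnit_or_isUnit hsplit with h | h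
  · exact (hirr i0).not_isUnit h
  · have hmem : i1 ∈ Finset.univ.erase i0 := by
      refine Finset.mem_erase.mpr ⟨?_, Finset.mem_univ _⟩
      intro hcon
      rw [hi1, hi0] at hcon
      exact absurd (congrArg Fin.val hcon) (by norm_num)
    exact (hirr i1).not_isUnit (isUnit_of_dvd_unit (Finset.dvd_prod_of_mem f hmem) h)
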